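/- Let Λ ⊂ ℝ² be a lattice, let {φ_λ}_{λ∈Λ} be a tight (Parseval) Gabor frame with generating function φ ∈ L²(ℝ), and let Ω ⊂ Λ be a finite set. Let M be the Ω×Ω Hermitian matrix with entries M(ν₁,ν₂) = ⟨φ_{ν₂}, φ_{ν₁}⟩, and let λ₁,…,λ_{|Ω|} be its eigenvalues. Then Σ_i λ_i(1 − λ_i) = Σ_{ν₁∈Λ∖Ω} Σ_{ν₂∈Ω} |⟨φ_{ν₂}, φ_{ν₁}⟩|². (The eigenvalues of M are the nonzero eigenvalues of the Gabor localization operator G_{φ,Ω}, so the left-hand side is the projection functional PF(G_{φ,Ω}).) -/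

import Mathlib

open MeasureTheory Filter Topology Pointwise

noncomputable section

/-- Euclidean dot product on ℝ². -/
def dot2 (v w : ℝ × ℝ) : ℝ := v.1 * w.1 + v.2 * w.2

/-- Euclidean norm on ℝ². -/
def enorm2 (v : ℝ × ℝ) : ℝ := Real.sqrt (v.1 ^ 2 + v.2 ^ 2)

/-- Time–frequency shift: for `l = (q, p)`, `(tfshift φ l) x = e^{2πipx} φ(x − q)`. -/
def tfshift (φ : ℝ → ℂ) (l : ℝ × ℝ) : ℝ → ℂ :=
  fun x => Complex.exp (2 * Real.pi * Complex.I * l.2 * x) * φ (x - l.1)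

/-- The L² inner product `⟨f, g⟩ = ∫ f ḡ`, linear in the first argument. -/
def gip (f g : ℝ → ℂ) : ℂ := ∫ x : ℝ, f x * (starRingEnd ℂ) (g x)

/-- A lattice in ℝ²: all integer combinations of two linearly independent vectors. -/
def IsLattice2 (Λ : Set (ℝ × ℝ)) : Prop :=
  ∃ v₁ v₂ : ℝ × ℝ, v₁.1 * v₂.2 - v₁.2 * v₂.1 ≠ 0 ∧
    Λ = {x | ∃ a b : ℤ, x = (a : ℝ) • v₁ + (b : ℝ) • v₂}

/-- `{φ_λ}_{λ∈Λ}` is a tight (Parseval) Gabor frame: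
`‖f‖² = Σ_{λ∈Λ} |⟨f,φ_λ⟩|²` for every `f ∈ L²(ℝ)`. -/
def IsParsevalGaborFrame (Λ : Set (ℝ × ℝ)) (φ : ℝ → ℂ) : Prop :=
  MemLp φ 2 volume ∧
  ∀ f : ℝ → ℂ, MemLp f 2 volume →
    ∫ x : ℝ, ‖f x‖ ^ 2 = ∑' lam : Λ, ‖gip f (tfshift φ ↑lam)‖ ^ 2

/-- Condition Φ: `Σ_{λ∈Λ} |⟨φ,φ_λ⟩|²·|λ| < ∞`. -/
def ConditionPhi (Λ : Set (ℝ × ℝ)) (φ : ℝ → ℂ) : Prop :=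
  Summable (fun lam : Λ => ‖gip φ (tfshift φ ↑lam)‖ ^ 2 * enorm2 ↑lam)

/-- `nv` is the unit normal of the segment from `p` to `q` pointing out of `Ω`:
it is unit, orthogonal to the segment, and near interior points of the segment
the set `Ω` lies on the side where `(x − z)·nv ≤ 0`. -/
def IsOutwardUnitNormal (Ω : Set (ℝ × ℝ)) (p q nv : ℝ × ℝ) : Prop :=
  enorm2 nv = 1 ∧ dot2 nv (q - p) = 0 ∧
    ∀ z ∈ openSegment ℝ p q, ∃ ε > 0, ∀ x ∈ Ω, enorm2 (x - z) < ε → dot2 (x - z) nv ≤ 0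

/-- The half-plane sum `Σ_{λ∈Λ, λ·nv ≥ 0} (λ·nv)·c(λ)`;
for `λ·nv ≥ 0`, `λ·nv` is the distance from `λ` to the line `{w : w·nv = 0}`. -/
def halfPlaneSum (Λ : Set (ℝ × ℝ)) (c : ℝ × ℝ → ℝ) (nv : ℝ × ℝ) : ℝ :=
  ∑' lam : Λ, if 0 ≤ dot2 (↑lam) nv then dot2 (↑lam) nv * c ↑lam else 0


/-! ### Auxiliary lemmas -/

lemma memLp_tfshift {φ : ℝ → ℂ} (hφ : MemLp φ 2 volume) (l : ℝ × ℝ) :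
    MemLp (tfshift φ l) 2 volume := by
  have hmp : MeasurePreserving (fun x : ℝ => x - l.1) volume volume :=
    measurePreserving_sub_right volume l.1
  have hshift : MemLp (fun x : ℝ => φ (x - l.1)) 2 volume :=
    hφ.comp_measurePreserving hmp
  have hmeas : AEStronglyMeasurable (tfshift φ l) volume := by
    apply AEStronglyMeasurable.mul
    · exact (Complex.continuous_exp.comp (by continuity)).aestronglyMeasurable
    · exact hshift.aestronglyMeasurable
  refine hshift.of_le hmeas ?_
  filter_upwards with x
  have hexp : ‖Complex.exp (2 * Real.pi * Complex.I * l.2 * x)‖ = 1 := by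
    have h : (2 * Real.pi * Complex.I * l.2 * x : ℂ)
        = ((2 * Real.pi * l.2 * x : ℝ) : ℂ) * Complex.I := by push_cast; ring
    rw [h, Complex.norm_exp_ofReal_mul_I]
  simp [tfshift, norm_mul, hexp]

lemma gip_self (f : ℝ → ℂ) : gip f f = ((∫ x : ℝ, ‖f x‖ ^ 2) : ℝ) := by
  have h : (fun x : ℝ => f x * (starRingEnd ℂ) (f x))
      = fun x : ℝ => ((‖f x‖ ^ 2 : ℝ) : ℂ) := by
    funext x
    rw [Complex.mul_conj']
    push_cast
    ring
  rw [gip, h]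
  exact integral_ofReal

lemma gip_zero_left {f g : ℝ → ℂ} (hf : f =ᵐ[volume] (0 : ℝ → ℂ)) : gip f g = 0 := by
  have h : (fun x : ℝ => f x * (starRingEnd ℂ) (g x)) =ᵐ[volume] (fun _ => (0 : ℂ)) := by
    filter_upwards [hf] with x hx
    simp [hx]
  rw [gip, integral_congr_ae h, integral_zero]

lemma summable_frame_terms {Λ : Set (ℝ × ℝ)} {φ : ℝ → ℂ}
    (hframe : IsParsevalGaborFrame Λ φ) {f : ℝ → ℂ} (hf : MemLp f 2 volume) :
    Summable (fun lam : Λ => ‖gip f (tfshift φ ↑lam)‖ ^ 2) := by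
  by_contra h
  have h0 : ∫ x : ℝ, ‖f x‖ ^ 2 = 0 := by
    rw [hframe.2 f hf, tsum_eq_zero_of_not_summable h]
  have hint : Integrable (fun x : ℝ => ‖f x‖ ^ 2) volume := by
    have h2 := hf.integrable_norm_rpow (by norm_num) (by norm_num)
    have h3 : (fun x : ℝ => ‖f x‖ ^ (ENNReal.toReal 2)) = fun x : ℝ => ‖f x‖ ^ 2 := by
      funext x
      rw [ENNReal.toReal_ofNat]
      rw [show ((2 : ℝ)) = ((2 : ℕ) : ℝ) by norm_num, Real.rpow_natCast]
    rwa [h3] at h2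
  have hzero : (fun x : ℝ => ‖f x‖ ^ 2) =ᵐ[volume] 0 :=
    (integral_eq_zero_iff_of_nonneg (fun x => by positivity) hint).mp h0
  have hf0 : f =ᵐ[volume] (0 : ℝ → ℂ) := by
    filter_upwards [hzero] with x hx
    have hx' : ‖f x‖ ^ 2 = 0 := hx
    have : ‖f x‖ = 0 := by nlinarith [norm_nonneg (f x)]
    simpa using this
  apply h
  have hz : (fun lam : Λ => ‖gip f (tfshift φ ↑lam)‖ ^ 2) = fun _ => (0 : ℝ) := by
    funext lam
    rw [gip_zero_left hf0]
    simp
  rw [hz]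
  exact summable_zero

/-- the projection functional of the Gabor localization operator
`G_{φ,Ω}` — i.e. `Σ_i λ_i(1−λ_i)` over the eigenvalues of the Gram matrix of the
frame vectors indexed by the finite set `Ω ⊂ Λ` — equals
`Σ_{ν₁∈Λ∖Ω} Σ_{ν₂∈Ω} |⟨φ_{ν₂},φ_{ν₁}⟩|²`. -/
theorem projection_functional_eq_offdiagonal_sum
    (Λ : Set (ℝ × ℝ)) (hΛ : IsLattice2 Λ)
    (φ : ℝ → ℂ) (hframe : IsParsevalGaborFrame Λ φ)
    (Ω : Finset (ℝ × ℝ)) (hΩ : ↑Ω ⊆ Λ)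
    (M : Matrix {x // x ∈ Ω} {x // x ∈ Ω} ℂ)
    (hMdef : ∀ ν₁ ν₂ : {x // x ∈ Ω},
      M ν₁ ν₂ = gip (tfshift φ ↑ν₂) (tfshift φ ↑ν₁))
    (hM : M.IsHermitian) :
    ∑ i : {x // x ∈ Ω}, hM.eigenvalues i * (1 - hM.eigenvalues i) =
      ∑' ν₁ : ↥(Λ \ ↑Ω), ∑ ν₂ ∈ Ω, ‖gip (tfshift φ ν₂) (tfshift φ ↑ν₁)‖ ^ 2 := by
  classical
  have hφ := hframe.1
  have hMM : ∀ ν₂ : {x // x ∈ Ω}, (∫ x : ℝ, ‖tfshift φ (↑ν₂ : ℝ × ℝ) x‖ ^ 2)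
      = ∑' lam : Λ, ‖gip (tfshift φ ↑ν₂) (tfshift φ ↑lam)‖ ^ 2 :=
    fun ν₂ => hframe.2 _ (memLp_tfshift hφ _)
  have hsum : ∀ ν₂ : {x // x ∈ Ω},
      Summable (fun lam : Λ => ‖gip (tfshift φ ↑ν₂) (tfshift φ ↑lam)‖ ^ 2) :=
    fun ν₂ => summable_frame_terms hframe (memLp_tfshift hφ _)
  set U : Matrix {x // x ∈ Ω} {x // x ∈ Ω} ℂ := ↑(hM.eigenvectorUnitary) with hU
  set D : Matrix {x // x ∈ Ω} {x // x ∈ Ω} ℂ :=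
    Matrix.diagonal (RCLike.ofReal ∘ hM.eigenvalues) with hD
  have hspec : M = U * D * star U := hM.spectral_theorem
  have hsU : star U * U = 1 := Unitary.coe_star_mul_self hM.eigenvectorUnitary
  have htr1 : M.trace = ∑ i : {x // x ∈ Ω}, (hM.eigenvalues i : ℂ) := by
    conv_lhs => rw [hspec]
    rw [Matrix.trace_mul_cycle, hsU, one_mul, hD, Matrix.trace_diagonal]
    simp [Function.comp]
  have hM2 : M * M = U * (D * D) * star U := by
    conv_lhs => rw [hspec]
    calc U * D * star U * (U * D * star U)
        = U * D * ((star U * U) * (D * star U)) := by simp only [mul_assoc]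
      _ = U * (D * D) * star U := by rw [hsU, one_mul]; simp only [mul_assoc]
  have htr2 : (M * M).trace = ∑ i : {x // x ∈ Ω}, ((hM.eigenvalues i : ℂ)) ^ 2 := by
    conv_lhs => rw [hM2]
    rw [Matrix.trace_mul_cycle, hsU, one_mul, hD, Matrix.diagonal_mul_diagonal,
      Matrix.trace_diagonal]
    simp [Function.comp, sq]
  have htr2'2 : (M * M).trace
      = ∑ i : {x // x ∈ Ω}, ∑ j : {x // x ∈ Ω}, ((‖M i j‖ ^ 2 : ℝ) : ℂ) := by
    rw [Matrix.trace]
    apply Finset.sum_congr rfl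
    intro i _
    rw [Matrix.diag_apply, Matrix.mul_apply]
    apply Finset.sum_congr rfl
    intro j _
    rw [← hM.apply j i, RCLike.star_def, Complex.mul_conj']
    push_cast
    ring
  have hre1 : ∑ i : {x // x ∈ Ω}, hM.eigenvalues i
      = ∑ ν : {x // x ∈ Ω}, ∫ x : ℝ, ‖tfshift φ (↑ν : ℝ × ℝ) x‖ ^ 2 := by
    have h2 : M.trace
        = ((∑ ν : {x // x ∈ Ω}, ∫ x : ℝ, ‖tfshift φ (↑ν : ℝ × ℝ) x‖ ^ 2 : ℝ) : ℂ) := by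
      rw [Matrix.trace]
      push_cast
      apply Finset.sum_congr rfl
      intro ν _
      rw [Matrix.diag_apply, hMdef ν ν, gip_self]
    have h3 := htr1.symm.trans h2
    exact_mod_cast h3
  have hre2 : ∑ i : {x // x ∈ Ω}, hM.eigenvalues i ^ 2
      = ∑ i : {x // x ∈ Ω}, ∑ j : {x // x ∈ Ω}, ‖M i j‖ ^ 2 := by
    have h3 := htr2.symm.trans htr2'2
    exact_mod_cast h3
  set S : Set ↥Λ := {lam : ↥Λ | (lam : ℝ × ℝ) ∈ Ω} with hS
  let eΩ : {x // x ∈ Ω} ≃ ↥S :=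
    { toFun := fun x => ⟨⟨↑x, hΩ x.2⟩, x.2⟩
      invFun := fun y => ⟨↑↑y, y.2⟩
      left_inv := fun x => rfl
      right_inv := fun y => rfl }
  let eC : ↥(Λ \ ↑Ω) ≃ ↥Sᶜ :=
    { toFun := fun x => ⟨⟨↑x, x.2.1⟩, fun hmem => x.2.2 hmem⟩
      invFun := fun y => ⟨↑↑y, ⟨(↑y : ↥Λ).2, fun hmem => y.2 hmem⟩⟩
      left_inv := fun x => rfl
      right_inv := fun y => rfl }
  have hCΩ : ∀ a : {x // x ∈ Ω}, ((↑↑(eΩ a) : ℝ × ℝ)) = ↑a := fun _ => rfl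
  have hCC : ∀ a : ↥(Λ \ ↑Ω), ((↑↑(eC a) : ℝ × ℝ)) = ↑a := fun _ => rfl
  have hsplit : ∀ ν₂ : {x // x ∈ Ω},
      (∫ x : ℝ, ‖tfshift φ (↑ν₂ : ℝ × ℝ) x‖ ^ 2)
        - ∑ ν₁ : {x // x ∈ Ω}, ‖M ν₁ ν₂‖ ^ 2
      = ∑' ν₁ : ↥(Λ \ ↑Ω), ‖gip (tfshift φ ↑ν₂) (tfshift φ ↑ν₁)‖ ^ 2 := by
    intro ν₂
    have hadd := Summable.tsum_subtype_add_tsum_subtype_compl (hsum ν₂) S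
    have hfin : (∑' lam : ↥S, ‖gip (tfshift φ ↑ν₂) (tfshift φ ((↑↑lam : ℝ × ℝ)))‖ ^ 2)
        = ∑ ν₁ : {x // x ∈ Ω}, ‖M ν₁ ν₂‖ ^ 2 := by
      rw [← Equiv.tsum_eq eΩ, tsum_fintype]
      apply Finset.sum_congr rfl
      intro ν₁ _
      rw [hMdef ν₁ ν₂, hCΩ ν₁]
    have hcompl : (∑' lam : ↥Sᶜ, ‖gip (tfshift φ ↑ν₂) (tfshift φ ((↑↑lam : ℝ × ℝ)))‖ ^ 2)
        = ∑' ν₁ : ↥(Λ \ ↑Ω), ‖gip (tfshift φ ↑ν₂) (tfshift φ ↑ν₁)‖ ^ 2 := by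
      rw [← Equiv.tsum_eq eC]
      exact tsum_congr fun a => by rw [hCC a]
    rw [hMM ν₂, ← hadd, hfin, hcompl]
    ring
  have hsub : ∀ ν₂ : {x // x ∈ Ω},
      Summable (fun ν₁ : ↥(Λ \ ↑Ω) => ‖gip (tfshift φ ↑ν₂) (tfshift φ ↑ν₁)‖ ^ 2) := by
    intro ν₂
    have h1 := ((hsum ν₂).subtype Sᶜ).comp_injective eC.injective
    refine h1.congr fun a => ?_
    simp only [Function.comp]
    rw [hCC a]
  have hswap : (∑' ν₁ : ↥(Λ \ ↑Ω), ∑ ν₂ ∈ Ω, ‖gip (tfshift φ ν₂) (tfshift φ ↑ν₁)‖ ^ 2)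
      = ∑ ν₂ : {x // x ∈ Ω}, ∑' ν₁ : ↥(Λ \ ↑Ω),
          ‖gip (tfshift φ ↑ν₂) (tfshift φ ↑ν₁)‖ ^ 2 := by
    have h1 : ∀ ν₁ : ↥(Λ \ ↑Ω), (∑ ν₂ ∈ Ω, ‖gip (tfshift φ ν₂) (tfshift φ ↑ν₁)‖ ^ 2)
        = ∑ ν₂ : {x // x ∈ Ω}, ‖gip (tfshift φ ↑ν₂) (tfshift φ ↑ν₁)‖ ^ 2 :=
      fun ν₁ => (Finset.sum_coe_sort Ω _).symm
    rw [tsum_congr h1]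
    exact Summable.tsum_finsetSum (fun ν₂ _ => hsub ν₂)
  calc ∑ i : {x // x ∈ Ω}, hM.eigenvalues i * (1 - hM.eigenvalues i)
      = ∑ i : {x // x ∈ Ω}, hM.eigenvalues i
        - ∑ i : {x // x ∈ Ω}, hM.eigenvalues i ^ 2 := by
        rw [← Finset.sum_sub_distrib]
        apply Finset.sum_congr rfl
        intro i _
        ring
    _ = ∑ ν₂ : {x // x ∈ Ω}, ((∫ x : ℝ, ‖tfshift φ (↑ν₂ : ℝ × ℝ) x‖ ^ 2)
          - ∑ ν₁ : {x // x ∈ Ω}, ‖M ν₁ ν₂‖ ^ 2) := by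
        rw [Finset.sum_sub_distrib, hre1, hre2, Finset.sum_comm]
    _ = ∑ ν₂ : {x // x ∈ Ω}, ∑' ν₁ : ↥(Λ \ ↑Ω),
          ‖gip (tfshift φ ↑ν₂) (tfshift φ ↑ν₁)‖ ^ 2 :=
        Finset.sum_congr rfl (fun ν₂ _ => hsplit ν₂)
    _ = ∑' ν₁ : ↥(Λ \ ↑Ω), ∑ ν₂ ∈ Ω, ‖gip (tfshift φ ν₂) (tfshift φ ↑ν₁)‖ ^ 2 := hswap.symm
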